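/- Logical X–Z anticommutation criterion for two-block codes: identify an X operator with a pair (p,q) of elements of a commutative F₂-algebra M with monomial basis, acting on qubits L(supp p) ∪ R(supp q), and a Z operator with (p̄, q̄) acting on L(supp p̄) ∪ R(supp q̄). Then the operators anticommute if and only if the coefficient of the identity monomial 1 in p·p̄ᵀ + q·q̄ᵀ is 1. -/

import Mathlib

lemma aux_mul_T {G : Type*} [Group G] [Fintype G] [DecidableEq G]
    (p pb Tpb : MonoidAlgebra (ZMod 2) G)
    (hTpb : Tpb = MonoidAlgebra.mapDomain (fun g : G => g⁻¹) pb) :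
    (p * Tpb).coeff 1 = ((p.coeff.support ∩ pb.coeff.support).card : ZMod 2) := by
  classical
  have key : ∀ x : ZMod 2, x ≠ 0 → x = 1 := by decide
  rw [MonoidAlgebra.mul_apply_antidiagonal p _ 1
      ((Finset.univ : Finset G).image (fun a => (a, a⁻¹)))]
  · rw [Finset.sum_image (by intro a _ b _ h; exact (Prod.mk.injEq _ _ _ _ ▸ h).1)]
    have hmap : ∀ a : G, Tpb.coeff a⁻¹ = pb.coeff a := by
      intro a
      rw [hTpb]; show Finsupp.mapDomain _ pb.coeff a⁻¹ = _
      rw [Finsupp.mapDomain_apply (fun x y h => inv_injective h)]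
    calc ∑ a : G, p.coeff a * Tpb.coeff a⁻¹
        = ∑ a : G, p.coeff a * pb.coeff a := by simp [hmap]
      _ = ∑ a ∈ p.coeff.support ∩ pb.coeff.support, p.coeff a * pb.coeff a := by
          refine (Finset.sum_subset (Finset.subset_univ _) ?_).symm
          intro a _ ha
          simp only [Finset.mem_inter, Finsupp.mem_support_iff, not_and_or, not_not] at ha
          rcases ha with h | h <;> simp [h]
      _ = ∑ a ∈ p.coeff.support ∩ pb.coeff.support, 1 := by
          apply Finset.sum_congr rfl
          intro a ha
          simp only [Finset.mem_inter, Finsupp.mem_support_iff] at ha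
          rw [key _ ha.1, key _ ha.2, one_mul]
      _ = _ := by simp
  · intro x
    simp only [Finset.mem_image, Finset.mem_univ, true_and]
    constructor
    · rintro ⟨a, rfl⟩; simp
    · intro h
      exact ⟨x.1, by rw [Prod.ext_iff]; exact ⟨rfl, inv_eq_of_mul_eq_one_right h⟩⟩


/-- Anticommutation criterion for two-block codes: the X operator `(p, q)` and the
Z operator `(p̄, q̄)` (supported on `L(supp p) ∪ R(supp q)` and
`L(supp p̄) ∪ R(supp q̄)`) anticommute — i.e. their supports intersect in an odd
number of qubits — if and only if the coefficient of the identity monomial in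
`p·p̄ᵀ + q·q̄ᵀ` equals 1. -/
theorem stmt_13 (l m : ℕ) [NeZero l] [NeZero m]
    (p q pb qb : MonoidAlgebra (ZMod 2) (Multiplicative (ZMod l × ZMod m)))
    (T : MonoidAlgebra (ZMod 2) (Multiplicative (ZMod l × ZMod m)) →
      MonoidAlgebra (ZMod 2) (Multiplicative (ZMod l × ZMod m)))
    (hT : ∀ f, T f = MonoidAlgebra.mapDomain (fun g => g⁻¹) f) :
    Odd ((p.coeff.support ∩ pb.coeff.support).card + (q.coeff.support ∩ qb.coeff.support).card) ↔
      (p * T pb + q * T qb).coeff 1 = 1 := by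
  set n := (p.coeff.support ∩ pb.coeff.support).card + (q.coeff.support ∩ qb.coeff.support).card with hn
  have : (p * T pb + q * T qb).coeff 1 = ((n : ℕ) : ZMod 2) := by
    rw [MonoidAlgebra.coeff_add, Finsupp.add_apply, aux_mul_T p pb (T pb) (hT pb), aux_mul_T q qb (T qb) (hT qb), hn, Nat.cast_add]
  rw [this, Nat.odd_iff, ← ZMod.natCast_mod n 2]
  have h2 : n % 2 = 0 ∨ n % 2 = 1 := by omega
  rcases h2 with h | h <;> rw [h] <;> decide
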